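/- Let G be a finite connected graph. Define the equivalence relation ∼ on the edge set of G as the equivalence relation generated by: e ∼ e' if e = e' or {e, e'} is a bond. If C is a cycle in G, e and e' are edges with e ∼ e', and e is an edge of C, then e' is also an edge of C; that is, any cycle containing one edge of a ∼-equivalence class contains the whole class. -/
import Mathlib

/-- A bond of a connected graph `G` is a minimal nonempty set of edges of `G`
whose deletion disconnects `G`: deleting it disconnects `G`, but deleting any
proper subset leaves the graph connected. -/
def SimpleGraph.IsBond {V : Type*} (G : SimpleGraph V) (E' : Set (Sym2 V)) : Prop :=
  E'.Nonempty ∧ E' ⊆ G.edgeSet ∧ ¬ (G.deleteEdges E').Connected ∧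
    ∀ F ⊂ E', (G.deleteEdges F).Connected

/-- The equivalence relation `∼` on edges, generated by: `e ∼ e'` if `e = e'`
or `{e, e'}` is a bond. -/
def SimpleGraph.EdgeEquiv {V : Type*} (G : SimpleGraph V) (e e' : Sym2 V) : Prop :=
  Relation.EqvGen (fun a b => a = b ∨ G.IsBond {a, b}) e e'

private lemma reachable_aux {V : Type*} {H : SimpleGraph V} {u v x y : V}
    (hr : (H \ SimpleGraph.fromEdgeSet {s(u, v)}).Reachable u v) (hxy : H.Reachable x y) :
    (H \ SimpleGraph.fromEdgeSet {s(u, v)}).Reachable x y := by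
  obtain ⟨p⟩ := hxy
  induction p with
  | nil => exact SimpleGraph.Reachable.refl _
  | @cons a b c h p ih =>
    refine SimpleGraph.Reachable.trans ?_ ih
    by_cases he : s(a, b) = s(u, v)
    · rw [Sym2.eq_iff] at he
      rcases he with ⟨rfl, rfl⟩ | ⟨rfl, rfl⟩
      · exact hr
      · exact hr.symm
    · exact SimpleGraph.Adj.reachable (by
        simp only [SimpleGraph.sdiff_adj, SimpleGraph.fromEdgeSet_adj]
        exact ⟨h, fun h' => he h'.1⟩)

private lemma bond_step {V : Type*} (G : SimpleGraph V) (hG : G.Connected)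
    {v : V} {C : G.Walk v v} (hC : C.IsCycle) {a b : Sym2 V}
    (hb : G.IsBond {a, b}) (ha : a ∈ C.edges) : b ∈ C.edges := by
  by_cases hab : a = b
  · exact hab ▸ ha
  obtain ⟨-, hsub, hdisc, hmin⟩ := hb
  have hG' : (G.deleteEdges {b}).Connected := by
    refine hmin {b} ⟨by intro x hx; simp_all, fun hs => hab ?_⟩
    have := hs (Set.mem_insert a {b})
    simpa using this
  by_contra hbC
  -- transfer the cycle to G.deleteEdges {b}
  have hedges : ∀ e ∈ C.edges, e ∈ (G.deleteEdges {b}).edgeSet := by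
    intro e he
    rw [SimpleGraph.edgeSet_deleteEdges]
    exact ⟨C.edges_subset_edgeSet he, fun h => hbC (Set.mem_singleton_iff.mp h ▸ he)⟩
  set G' := G.deleteEdges {b} with hG'def
  have hC' : (C.transfer G' hedges).IsCycle := hC.transfer hedges
  have ha' : a ∈ (C.transfer G' hedges).edges := by rwa [SimpleGraph.Walk.edges_transfer]
  induction a using Sym2.ind with
  | _ u w =>
  have hr : G'.Adj u w ∧ (G' \ SimpleGraph.fromEdgeSet {s(u, w)}).Reachable u w :=
    SimpleGraph.adj_and_reachable_delete_edges_iff_exists_cycle.mpr ⟨v, _, hC', ha'⟩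
  have hconn : (G' \ SimpleGraph.fromEdgeSet {s(u, w)}).Connected := by
    haveI : Nonempty V := hG.nonempty
    exact ⟨fun x y => reachable_aux hr.2 (hG'.preconnected x y)⟩
  apply hdisc
  have : (G' \ SimpleGraph.fromEdgeSet {s(u, w)}) = G.deleteEdges {s(u, w), b} := by
    show (G.deleteEdges {b}).deleteEdges {s(u, w)} = _
    rw [SimpleGraph.deleteEdges_deleteEdges]
    congr 1
    ext x; simp [or_comm]
  rwa [this] at hconn

/-- Any cycle of a finite connected graph containing one edge of a
`∼`-equivalence class contains the whole class: if `e ∼ e'` and `e` lies on a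
cycle `C`, then so does `e'`. -/
theorem mem_cycle_of_edgeEquiv {V : Type*} [Fintype V]
    (G : SimpleGraph V) (hG : G.Connected) (v : V) (C : G.Walk v v)
    (hC : C.IsCycle) (e e' : Sym2 V) (h : G.EdgeEquiv e e')
    (he : e ∈ C.edges) : e' ∈ C.edges := by
  have key : ∀ a b : Sym2 V, G.EdgeEquiv a b → (a ∈ C.edges ↔ b ∈ C.edges) := by
    intro a b hab
    induction hab with
    | rel a b h =>
      rcases h with rfl | hbond
      · rfl
      · exact ⟨fun ha => bond_step G hG hC hbond ha,
          fun hb => bond_step G hG hC (by rwa [Set.pair_comm]) hb⟩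
    | refl a => rfl
    | symm a b _ ih => exact ih.symm
    | trans a b c _ _ ih₁ ih₂ => exact ih₁.trans ih₂
  exact (key e e' h).mp he
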